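/- Let w = t_v σ ∈ W̃_{D_m} and 1 ≤ k ≤ m, and suppose that μ_k^w and μ_{k−1}^w both satisfy (SP1). Then c_k^w = c_{k−1}^w + u(k) − u(σ(k)). -/

import Mathlib

open Finset

namespace TypeD

abbrev VecZ (m : ℕ) := Fin (2 * m) → ℤ
abbrev VecR (m : ℕ) := Fin (2 * m) → ℝ

/-- `σ ∈ S_{2m}^∘`: even, and commuting with `j ↦ j*`. -/
def InSO (m : ℕ) (σ : Equiv.Perm (Fin (2 * m))) : Prop :=
  Equiv.Perm.sign σ = 1 ∧ ∀ j, σ j.rev = (σ j).rev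

/-- `t ∈ X_{*D_m}`. -/
def InXD (m : ℕ) (t : VecZ m) : Prop :=
  ∀ j j' : Fin (2 * m), t j + t j.rev = t j' + t j'.rev

/-- `ω_i ∈ ℤ^{2m}`: writing `i = 2m·b + c` with `0 ≤ c < 2m`, the first `c` entries
are `-b-1` and the rest are `-b`. -/
def omegaD (m : ℕ) (i : ℤ) (j : Fin (2 * m)) : ℤ :=
  if ((j : ℕ) : ℤ) < i % (2 * (m : ℤ)) then -(i / (2 * (m : ℤ))) - 1
  else -(i / (2 * (m : ℤ)))

/-- `μ_k^w = w·ω_k − ω_k` for `w = t_t σ`. -/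
def muD (m : ℕ) (t : VecZ m) (σ : Equiv.Perm (Fin (2 * m))) (k : ℤ) (j : Fin (2 * m)) : ℤ :=
  t j + omegaD m k (σ⁻¹ j) - omegaD m k j

/-- `ν_k^w = (μ_k^w + μ_{−k}^w)/2`, real-valued. -/
noncomputable def nuD (m : ℕ) (t : VecZ m) (σ : Equiv.Perm (Fin (2 * m))) (k : ℤ) (j : Fin (2 * m)) : ℝ :=
  ((muD m t σ k j + muD m t σ (-k) j : ℤ) : ℝ) / 2

/-- `c_k^w = #{j : μ_k^w(j) = 2}`. -/
noncomputable def cD (m : ℕ) (t : VecZ m) (σ : Equiv.Perm (Fin (2 * m))) (k : ℤ) : ℕ :=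
  Set.ncard {j : Fin (2 * m) | muD m t σ k j = 2}

/-- the cocharacter `μ = (2^{(q)}, 1^{(2m−2q)}, 0^{(q)})`. -/
def muQ (m q : ℕ) (j : Fin (2 * m)) : ℤ :=
  if (j : ℕ) < q then 2 else if (j : ℕ) < 2 * m - q then 1 else 0

/-- the coroot lattice `Q∨_{D_m}`. -/
def QveeD (m : ℕ) : Set (VecZ m) :=
  {x | (∀ j, x j + x j.rev = 0) ∧
    Even (∑ j ∈ Finset.univ.filter (fun j : Fin (2 * m) => (j : ℕ) < m), x j)}

/-- `j ∈ A_a` (1-indexed `{1,…,a} ∪ {2m+1−a,…,2m}`). -/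
def memA (m a : ℕ) (j : Fin (2 * m)) : Prop := (j : ℕ) < a ∨ 2 * m - a ≤ (j : ℕ)

/-- `j ∈ B_a` (1-indexed `{a+1,…,2m−a}`). -/
def memB (m a : ℕ) (j : Fin (2 * m)) : Prop := a ≤ (j : ℕ) ∧ (j : ℕ) < 2 * m - a

def IsIntVal (x : ℝ) : Prop := ∃ z : ℤ, x = (z : ℝ)

/-- a half-integer: an element of `(1/2)ℤ ∖ ℤ`. -/
def IsHalfInt (x : ℝ) : Prop := (∃ z : ℤ, x = (z : ℝ) / 2) ∧ ¬ IsIntVal x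

/-- `μ_k^w` is self-dual, i.e. `μ_k^w = μ_{−k}^w`. -/
def SelfDual (m : ℕ) (t : VecZ m) (σ : Equiv.Perm (Fin (2 * m))) (k : ℤ) : Prop :=
  ∀ j, muD m t σ k j = muD m t σ (-k) j

/-- (SP1) at `k`. -/
def SP1 (m : ℕ) (t : VecZ m) (σ : Equiv.Perm (Fin (2 * m))) (k : ℤ) : Prop :=
  (∀ j, muD m t σ k j + muD m t σ (-k) j.rev = 2) ∧
  (∀ j, 0 ≤ muD m t σ k j ∧ muD m t σ k j ≤ 2)

/-- (SP2) at `k`. -/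
def SP2 (m q : ℕ) (t : VecZ m) (σ : Equiv.Perm (Fin (2 * m))) (k : ℤ) : Prop :=
  cD m t σ k ≤ q

/-- (SP3) at `k`. -/
def SP3 (m q : ℕ) (t : VecZ m) (σ : Equiv.Perm (Fin (2 * m))) (k : ℕ) : Prop :=
  (SelfDual m t σ (k : ℤ) ∧ (fun j => muD m t σ (k : ℤ) j - muQ m q j) ∉ QveeD m) →
    ∃ j₁ j₂ : Fin (2 * m), memA m k j₁ ∧ memB m k j₂ ∧
      muD m t σ (k : ℤ) j₁ = 1 ∧ muD m t σ (k : ℤ) j₂ = 1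

/-- (SP1') at `k`. -/
def SP1' (m : ℕ) (t : VecZ m) (σ : Equiv.Perm (Fin (2 * m))) (k : ℤ) : Prop :=
  (∀ j, nuD m t σ k j + nuD m t σ k j.rev = 2) ∧
  (∀ j, 0 ≤ nuD m t σ k j ∧ nuD m t σ k j ≤ 2)

/-- (SP2') at `k`. -/
def SP2' (m q : ℕ) (t : VecZ m) (σ : Equiv.Perm (Fin (2 * m))) (k : ℤ) : Prop :=
  (Set.ncard {j : Fin (2 * m) | nuD m t σ k j = 2} : ℝ) +
    (Set.ncard {j : Fin (2 * m) | ¬ IsIntVal (nuD m t σ k j)} : ℝ) / 4 ≤ (q : ℝ)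

/-- `ν_k^w − μ ∈ Q∨_{D_m}`. -/
def NuCongQvee (m q : ℕ) (t : VecZ m) (σ : Equiv.Perm (Fin (2 * m))) (k : ℤ) : Prop :=
  ∃ y ∈ QveeD m, ∀ j, nuD m t σ k j = ((muQ m q j + y j : ℤ) : ℝ)

/-- (SP3') at `k`. -/
def SP3' (m q : ℕ) (t : VecZ m) (σ : Equiv.Perm (Fin (2 * m))) (k : ℕ) : Prop :=
  ((∀ j, IsIntVal (nuD m t σ (k : ℤ) j)) ∧ ¬ NuCongQvee m q t σ (k : ℤ)) →
    ∃ j₁ j₂ : Fin (2 * m), memA m k j₁ ∧ memB m k j₂ ∧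
      nuD m t σ (k : ℤ) j₁ = 1 ∧ nuD m t σ (k : ℤ) j₂ = 1

/-- the orbit `S_{2m}^∘ · μ` inside `ℝ^{2m}`. -/
def OrbitMu (m q : ℕ) : Set (VecR m) :=
  {x | ∃ σ : Equiv.Perm (Fin (2 * m)), InSO m σ ∧ ∀ j, x j = ((muQ m q (σ⁻¹ j) : ℤ) : ℝ)}

/-- `Conv(S_{2m}^∘ · μ)`. -/
def ConvMu (m q : ℕ) : Set (VecR m) := convexHull ℝ (OrbitMu m q)

/-- the affine action of `w = t_t σ` on `ℝ^{2m}`. -/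
noncomputable def actR (m : ℕ) (t : VecZ m) (σ : Equiv.Perm (Fin (2 * m))) (x : VecR m) (j : Fin (2 * m)) : ℝ :=
  (t j : ℝ) + x (σ⁻¹ j)

/-- the point `a_k = ((−1/2)^{(k)}, 0^{(2m−2k)}, (1/2)^{(k)})`. -/
noncomputable def aD (m k : ℕ) (j : Fin (2 * m)) : ℝ :=
  if (j : ℕ) < k then -(1 / 2) else if (j : ℕ) < 2 * m - k then 0 else 1 / 2

/-- the point `a_{0'} = (−1, 0^{(2m−2)}, 1)`. -/
noncomputable def a0' (m : ℕ) (j : Fin (2 * m)) : ℝ :=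
  if (j : ℕ) = 0 then -1 else if (j : ℕ) = 2 * m - 1 then 1 else 0

/-- the point `a_{m'} = ((−1/2)^{(m−1)}, 1/2, −1/2, (1/2)^{(m−1)})`. -/
noncomputable def am' (m : ℕ) (j : Fin (2 * m)) : ℝ :=
  if (j : ℕ) < m - 1 then -(1 / 2)
  else if (j : ℕ) = m - 1 then 1 / 2
  else if (j : ℕ) = m then -(1 / 2)
  else 1 / 2

/-- `ν_{0'}^w = w·a_{0'} − a_{0'}`. -/
noncomputable def nu0' (m : ℕ) (t : VecZ m) (σ : Equiv.Perm (Fin (2 * m))) (j : Fin (2 * m)) : ℝ :=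
  actR m t σ (a0' m) j - a0' m j

/-- `ν_{m'}^w = w·a_{m'} − a_{m'}`. -/
noncomputable def num' (m : ℕ) (t : VecZ m) (σ : Equiv.Perm (Fin (2 * m))) (j : Fin (2 * m)) : ℝ :=
  actR m t σ (am' m) j - am' m j

/-- membership in the real apartment `{x : x(1)+x(2m) = ⋯ = x(m)+x(m+1)}`. -/
def InApartR (m : ℕ) (x : VecR m) : Prop :=
  ∀ j j' : Fin (2 * m), x j + x j.rev = x j' + x j'.rev

/-- membership in the base alcove `A_{D_m}`. -/
def InAlcove (m : ℕ) (x : VecR m) : Prop :=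
  InApartR m x ∧
  (∀ j0 jt : Fin (2 * m), (j0 : ℕ) = 0 → 1 ≤ (jt : ℕ) → (jt : ℕ) ≤ m →
    x j0 < x jt ∧ x j0.rev - 1 < x jt) ∧
  (∀ j j' : Fin (2 * m), 1 ≤ (j : ℕ) → (j : ℕ) ≤ m - 2 → (j : ℕ) < (j' : ℕ) →
    (j' : ℕ) ≤ m → x j < x j')

/-- `w = t_t σ` is μ-permissible: `w ≡ t_μ mod W_{aff}` (equivalently
`ν_0^w − μ ∈ Q∨_{D_m}`) and `w·x − x ∈ Conv(S_{2m}^∘ μ)` for all `x` in the base alcove. -/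
def MuPermissible (m q : ℕ) (t : VecZ m) (σ : Equiv.Perm (Fin (2 * m))) : Prop :=
  NuCongQvee m q t σ 0 ∧
  ∀ x : VecR m, InAlcove m x → (fun j => actR m t σ x j - x j) ∈ ConvMu m q

/-- the coroot `α∨_{i,j} = e_i − e_j + e_{j*} − e_{i*}`. -/
def corootD (m : ℕ) (i j l : Fin (2 * m)) : ℤ :=
  (if l = i then 1 else 0) - (if l = j then 1 else 0) +
    (if l = j.rev then 1 else 0) - (if l = i.rev then 1 else 0)

/-- `(t', σ')` represents `s_{α̃_{i,j;d}} · w` for `w = t_t σ`: on the apartment it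
acts by `x ↦ w·x − ⟨α̃_{i,j;d}, w·x⟩ α∨_{i,j}`. -/
def IsReflOf (m : ℕ) (i j : Fin (2 * m)) (d : ℤ) (t : VecZ m) (σ : Equiv.Perm (Fin (2 * m)))
    (t' : VecZ m) (σ' : Equiv.Perm (Fin (2 * m))) : Prop :=
  ∀ x : VecR m, InApartR m x → ∀ l,
    actR m t' σ' x l =
      actR m t σ x l - (actR m t σ x i - actR m t σ x j - (d : ℝ)) * (corootD m i j l : ℝ)

/-- Membership of `i` in `2mℤ ± I`. -/
def FaceIdxD (m : ℕ) (I : Finset ℕ) (i : ℤ) : Prop :=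
  ∃ a ∈ I, ∃ b : ℤ, i = 2 * (m : ℤ) * b + (a : ℤ) ∨ i = 2 * (m : ℤ) * b - (a : ℤ)

/-- `v` is a `d`-face of type `(2m, I)`. -/
structure IsFaceD (m : ℕ) (I : Finset ℕ) (d : ℤ) (v : ℤ → VecZ m) : Prop where
  per : ∀ i, FaceIdxD m I i → ∀ j, v (i + 2 * (m : ℤ)) j = v i j - 1
  mono : ∀ i i', FaceIdxD m I i → FaceIdxD m I i' → i ≤ i' → ∀ j, v i' j ≤ v i j
  sumEq : ∀ i i', FaceIdxD m I i → FaceIdxD m I i' → (∑ j, v i j) - (∑ j, v i' j) = i' - i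
  dual : ∀ i, FaceIdxD m I i → ∀ j, v i j + v (-i) j.rev = d

/-- `μ_i^v := v_i − ω_i` for a face `v`. -/
def muFaceD (m : ℕ) (v : ℤ → VecZ m) (i : ℤ) (j : Fin (2 * m)) : ℤ := v i j - omegaD m i j

/-- `ε` of a translation vector: the sum of the first `m` entries mod 2. -/
def epsVec (m : ℕ) (x : VecZ m) : ZMod 2 :=
  ((∑ j ∈ Finset.univ.filter (fun j : Fin (2 * m) => (j : ℕ) < m), x j : ℤ) : ZMod 2)

/-- membership of `(v, γ)` in `F_{I,D_m}`. -/
def MemFD (m : ℕ) (I : Finset ℕ) (v : ℤ → VecZ m) (γ : ZMod 2) : Prop :=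
  (∃ d, IsFaceD m I d v) ∧
  (if 0 ∈ I then
    if m ∈ I then
      (fun j => muFaceD m v 0 j - muFaceD m v (m : ℤ) j) ∈ QveeD m ∧
        γ = epsVec m (fun j => muFaceD m v 0 j)
    else γ = epsVec m (fun j => muFaceD m v 0 j)
  else if m ∈ I then γ = epsVec m (fun j => muFaceD m v (m : ℤ) j)
  else True)

/-- membership of `t_tx σx` in `W_{I,D_m}` (the group conditions on `(tx, σx)` being
assumed separately): it lies in `W_{aff,D_m}` and fixes `a_k` for all `k ∈ I`. -/
def MemWI (m : ℕ) (I : Finset ℕ) (tx : VecZ m) (σx : Equiv.Perm (Fin (2 * m))) : Prop :=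
  tx ∈ QveeD m ∧ ∀ k ∈ I, ∀ j, (tx j : ℝ) + aD m k (σx⁻¹ j) = aD m k j

/-- (SP1) at `k` for a face. -/
def SP1F (m : ℕ) (v : ℤ → VecZ m) (k : ℕ) : Prop :=
  (∀ j, muFaceD m v (k : ℤ) j + muFaceD m v (-(k : ℤ)) j.rev = 2) ∧
  (∀ j, 0 ≤ muFaceD m v (k : ℤ) j ∧ muFaceD m v (k : ℤ) j ≤ 2)

/-- (SP2) at `k` for a face. -/
def SP2F (m q : ℕ) (v : ℤ → VecZ m) (k : ℕ) : Prop :=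
  Set.ncard {j : Fin (2 * m) | muFaceD m v (k : ℤ) j = 2} ≤ q

/-- (SP3) at `k` for a face. -/
def SP3F (m q : ℕ) (v : ℤ → VecZ m) (k : ℕ) : Prop :=
  ((∀ j, muFaceD m v (k : ℤ) j = muFaceD m v (-(k : ℤ)) j) ∧
      (fun j => muFaceD m v (k : ℤ) j - muQ m q j) ∉ QveeD m) →
    ∃ j₁ j₂ : Fin (2 * m), memA m k j₁ ∧ memB m k j₂ ∧
      muFaceD m v (k : ℤ) j₁ = 1 ∧ muFaceD m v (k : ℤ) j₂ = 1

/-- `(v, γ) ∈ F_{I,D_m}` is μ-spin-permissible. -/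
def SpinPermF (m q : ℕ) (I : Finset ℕ) (v : ℤ → VecZ m) (γ : ZMod 2) : Prop :=
  γ = epsVec m (fun j => muQ m q j) ∧ ∀ k ∈ I, SP1F m v k ∧ SP2F m q v k ∧ SP3F m q v k

theorem statement5 (m : ℕ) (hm : 2 ≤ m)
    (t : VecZ m) (σ : Equiv.Perm (Fin (2 * m))) (ht : InXD m t) (hσ : InSO m σ)
    (u : Fin (2 * m) → ℤ)
    (hu : ∀ j, IsGreatest {x : ℤ | ∃ l : ℕ, l ≤ 2 * m ∧ x = muD m t σ (l : ℤ) j} (u j))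
    (k : ℕ) (hk1 : 1 ≤ k) (hk2 : k ≤ m)
    (h1 : SP1 m t σ (k : ℤ)) (h1' : SP1 m t σ ((k : ℤ) - 1)) :
    (cD m t σ (k : ℤ) : ℤ) =
      (cD m t σ ((k : ℤ) - 1) : ℤ) + u ⟨k - 1, by omega⟩ - u (σ ⟨k - 1, by omega⟩) := by

  have hm0 : 0 < 2 * m := by omega
  -- closed formula for muD at natural l < 2m
  have hform : ∀ l : ℕ, l < 2 * m → ∀ j : Fin (2 * m),
      muD m t σ (l : ℤ) j = t j + (if (j : ℕ) < l then 1 else 0)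
        - (if ((σ⁻¹ j : Fin (2 * m)) : ℕ) < l then 1 else 0) := by
    intro l hl j
    have h1 : (l : ℤ) % (2 * (m : ℤ)) = (l : ℤ) := by
      rw [Int.emod_eq_of_lt] <;> omega
    have h2 : (l : ℤ) / (2 * (m : ℤ)) = 0 := by
      apply Int.ediv_eq_zero_of_lt <;> omega
    unfold muD omegaD
    rw [h1, h2]
    split_ifs <;> omega
  have hform2m : ∀ j : Fin (2 * m), muD m t σ ((2 * m : ℕ) : ℤ) j = t j := by
    intro j
    have e : ((2 * m : ℕ) : ℤ) = 2 * (m : ℤ) := by push_cast; ring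
    have hne : (2 * (m : ℤ)) ≠ 0 := by omega
    unfold muD omegaD
    rw [e, Int.emod_self, Int.ediv_self hne]
    split_ifs <;> omega
  set j₀ : Fin (2 * m) := ⟨k - 1, by omega⟩ with hj₀
  have hj0v : (j₀ : ℕ) = k - 1 := rfl
  have hkcast : (k : ℤ) - 1 = ((k - 1 : ℕ) : ℤ) := by omega
  rw [hkcast] at h1' ⊢
  -- the step formula
  have hstep : ∀ j : Fin (2 * m), j ≠ j₀ → j ≠ σ j₀ →
      muD m t σ (k : ℤ) j = muD m t σ ((k - 1 : ℕ) : ℤ) j := by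
    intro j hja hjb
    have hv : (j : ℕ) ≠ k - 1 := by
      intro h; exact hja (Fin.ext (by rw [h, hj0v]))
    have hv' : ((σ⁻¹ j : Fin (2 * m)) : ℕ) ≠ k - 1 := by
      intro h
      have : σ⁻¹ j = j₀ := Fin.ext (by rw [h, hj0v])
      exact hjb (by rw [← this, Equiv.Perm.coe_inv, Equiv.apply_symm_apply])
    rw [hform k (by omega) j, hform (k - 1) (by omega) j]
    split_ifs <;> omega
  by_cases hfix : σ j₀ = j₀
  · -- σ fixes j₀: μ_k = μ_{k-1} and u terms cancel
    have heq : ∀ j : Fin (2 * m), muD m t σ (k : ℤ) j = muD m t σ ((k - 1 : ℕ) : ℤ) j := by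
      intro j
      by_cases hja : j = j₀
      · subst hja
        have hinv : σ⁻¹ j₀ = j₀ := by
          have h3 := congrArg (fun x => σ⁻¹ x) hfix
          simp only [Equiv.Perm.coe_inv, Equiv.symm_apply_apply] at h3
          exact h3.symm
        rw [hform k (by omega) j₀, hform (k - 1) (by omega) j₀, hinv]
        rw [hj0v]
        split_ifs <;> omega
      · refine hstep j hja ?_
        intro h
        exact hja (by rw [h, hfix])
    have hc : cD m t σ (k : ℤ) = cD m t σ ((k - 1 : ℕ) : ℤ) := by
      unfold cD
      congr 1
      ext j
      simp [heq j]
    rw [hc, hfix]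
    ring
  · -- σ j₀ ≠ j₀
    have hsv : ((σ⁻¹ j₀ : Fin (2 * m)) : ℕ) ≠ k - 1 := by
      intro h
      have h2 : σ⁻¹ j₀ = j₀ := Fin.ext (by rw [h, hj0v])
      have h3 := congrArg (fun x => σ x) h2
      simp only [Equiv.Perm.coe_inv, Equiv.apply_symm_apply] at h3
      exact hfix h3.symm
    have hj1v : ((σ j₀ : Fin (2 * m)) : ℕ) ≠ k - 1 := by
      intro h
      exact hfix (Fin.ext (by rw [h, hj0v]))
    have hinv1 : σ⁻¹ (σ j₀) = j₀ := Equiv.symm_apply_apply σ j₀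
    -- u j₀ = μ_k(j₀)
    have hu0 : u j₀ = muD m t σ (k : ℤ) j₀ := by
      refine (hu j₀).unique ⟨⟨k, by omega, rfl⟩, ?_⟩
      rintro x ⟨l, hl, rfl⟩
      rcases lt_or_eq_of_le hl with h | h
      · rw [hform l h j₀, hform k (by omega) j₀, hj0v]
        split_ifs <;> omega
      · rw [h, hform2m j₀, hform k (by omega) j₀, hj0v]
        split_ifs <;> omega
    -- u (σ j₀) = μ_{k-1}(σ j₀)
    have hu1 : u (σ j₀) = muD m t σ ((k - 1 : ℕ) : ℤ) (σ j₀) := by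
      refine (hu (σ j₀)).unique ⟨⟨k - 1, by omega, rfl⟩, ?_⟩
      rintro x ⟨l, hl, rfl⟩
      rcases lt_or_eq_of_le hl with h | h
      · rw [hform l h (σ j₀), hform (k - 1) (by omega) (σ j₀), hinv1, hj0v]
        split_ifs <;> omega
      · rw [h, hform2m (σ j₀), hform (k - 1) (by omega) (σ j₀), hinv1, hj0v]
        split_ifs <;> omega
    -- values at j₀ and σ j₀
    have hA : muD m t σ (k : ℤ) j₀ = muD m t σ ((k - 1 : ℕ) : ℤ) j₀ + 1 := by
      rw [hform k (by omega) j₀, hform (k - 1) (by omega) j₀, hj0v]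
      split_ifs <;> omega
    have hB : muD m t σ (k : ℤ) (σ j₀) = muD m t σ ((k - 1 : ℕ) : ℤ) (σ j₀) - 1 := by
      rw [hform k (by omega) (σ j₀), hform (k - 1) (by omega) (σ j₀), hinv1, hj0v]
      split_ifs <;> omega
    -- bounds
    have hb1 := h1.2 j₀
    have hb2 := h1.2 (σ j₀)
    have hb3 := h1'.2 j₀
    have hb4 := h1'.2 (σ j₀)
    -- counting
    have hcount : ∀ l : ℤ, (cD m t σ l : ℤ) =
        ∑ j : Fin (2 * m), (if muD m t σ l j = 2 then (1 : ℤ) else 0) := by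
      intro l
      have : cD m t σ l = (univ.filter (fun j => muD m t σ l j = 2)).card := by
        rw [cD, ← Set.ncard_coe_finset]
        congr 1
        ext j
        simp
      rw [this, Finset.card_filter]
      push_cast
      rfl
    have hne : j₀ ≠ σ j₀ := fun h => hfix h.symm
    have hdiff : (cD m t σ (k : ℤ) : ℤ) - (cD m t σ ((k - 1 : ℕ) : ℤ) : ℤ) =
        ∑ j : Fin (2 * m), ((if muD m t σ (k : ℤ) j = 2 then (1 : ℤ) else 0)
          - (if muD m t σ ((k - 1 : ℕ) : ℤ) j = 2 then (1 : ℤ) else 0)) := by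
      rw [hcount, hcount, Finset.sum_sub_distrib]
    have hsum : ∑ j : Fin (2 * m), ((if muD m t σ (k : ℤ) j = 2 then (1 : ℤ) else 0)
          - (if muD m t σ ((k - 1 : ℕ) : ℤ) j = 2 then (1 : ℤ) else 0)) =
        ((if muD m t σ (k : ℤ) j₀ = 2 then (1 : ℤ) else 0)
          - (if muD m t σ ((k - 1 : ℕ) : ℤ) j₀ = 2 then (1 : ℤ) else 0)) +
        ((if muD m t σ (k : ℤ) (σ j₀) = 2 then (1 : ℤ) else 0)
          - (if muD m t σ ((k - 1 : ℕ) : ℤ) (σ j₀) = 2 then (1 : ℤ) else 0)) := by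
      refine ((Finset.sum_subset (Finset.subset_univ ({j₀, σ j₀} : Finset (Fin (2 * m)))) ?_).symm.trans
        (Finset.sum_pair hne))
      intro j _ hj
      simp only [Finset.mem_insert, Finset.mem_singleton, not_or] at hj
      rw [hstep j hj.1 hj.2]
      ring
    rw [hu0, hu1]
    have := hdiff.trans hsum
    split_ifs at this <;> omega


end TypeD
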